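/- Let E be a real inner product space that is complete, let C ⊆ E be a nonempty closed convex set, and let c ∈ (0, 1). A point p ∈ C satisfies P_C((1-c)·p) = p if and only if ‖p‖ ≤ ‖y‖ for every y ∈ C; that is, the fixed points of the projected PGDM gradient step are exactly the minimum-norm points of C (the feasible points closest to the global optimum 0). (Fixed-point characterization underlying the claim that projected sampling steers samples to the point of maximum likelihood satisfying the constraints.) -/

import Mathlib

open Metric

/-- Fixed-point characterization of the projected PGDM gradient step: a feasible
point `p ∈ C` satisfies `P_C((1-c)•p) = p` (i.e., `p` is a nearest point of `C`
to `(1-c)•p`, which characterizes the unique metric projection for `C` nonempty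
closed convex in a Hilbert space) if and only if `p` is a minimum-norm point of
`C`. -/
theorem stmt13 {E : Type*} [NormedAddCommGroup E] [InnerProductSpace ℝ E] [CompleteSpace E]
    (C : Set E) (hCne : C.Nonempty) (hCcl : IsClosed C) (hCcv : Convex ℝ C)
    (c : ℝ) (hc : c ∈ Set.Ioo (0 : ℝ) 1)
    (p : E) (hpC : p ∈ C) :
    (∀ y ∈ C, dist ((1 - c) • p) p ≤ dist ((1 - c) • p) y) ↔ ∀ y ∈ C, ‖p‖ ≤ ‖y‖ := by
  obtain ⟨hc0, hc1⟩ := hc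
  set x : E := (1 - c) • p with hx
  have hxp : x - p = (-c) • p := by
    rw [hx]; module
  have hdxp : dist x p = c * ‖p‖ := by
    rw [dist_eq_norm, hxp, norm_smul, Real.norm_eq_abs, abs_of_neg (by linarith)]
    ring
  constructor
  · intro h y hy
    -- variational inequality
    have hI : (inner ℝ (x - p) (y - p) : ℝ) ≤ 0 := by
      by_contra hI
      push_neg at hI
      set I : ℝ := (inner ℝ (x - p) (y - p) : ℝ)
      set M : ℝ := ‖y - p‖ ^ 2 with hM
      have hMnn : 0 ≤ M := by positivity
      have key : ∀ t : ℝ, 0 < t → t ≤ 1 → 2 * t * I ≤ t ^ 2 * M := by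
        intro t ht0 ht1
        have hz : p + t • (y - p) ∈ C := by
          have := hCcv hpC hy (by linarith : (0:ℝ) ≤ 1 - t) (le_of_lt ht0) (by ring)
          convert this using 1
          module
        have hd := h _ hz
        have h1 : ‖x - p‖ ≤ ‖x - (p + t • (y - p))‖ := by
          simpa [dist_eq_norm] using hd
        have h2 : x - (p + t • (y - p)) = (x - p) - t • (y - p) := by abel
        have h3 : ‖x - p‖ ^ 2 ≤ ‖(x - p) - t • (y - p)‖ ^ 2 := by
          rw [← h2]; exact pow_le_pow_left₀ (norm_nonneg _) h1 2
        have h4 : ‖(x - p) - t • (y - p)‖ ^ 2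
            = ‖x - p‖ ^ 2 - 2 * (t * I) + t ^ 2 * M := by
          rw [@norm_sub_sq_real, real_inner_smul_right, norm_smul, Real.norm_eq_abs,
            abs_of_pos ht0, mul_pow]
          try ring
        nlinarith [h3, h4]
      rcases eq_or_lt_of_le hMnn with hM0 | hMpos
      · have := key 1 one_pos le_rfl
        nlinarith
      · have ht : 0 < min 1 (I / M) := lt_min one_pos (div_pos hI hMpos)
        have := key (min 1 (I / M)) ht (min_le_left _ _)
        have h5 : min 1 (I / M) * M ≤ I :=
          (le_div_iff₀ hMpos).mp (min_le_right _ _)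
        nlinarith [ht, this, h5, min_le_left (1:ℝ) (I / M)]
    have hIp : ‖p‖ ^ 2 ≤ (inner ℝ p y : ℝ) := by
      rw [hxp, real_inner_smul_left, inner_sub_right, real_inner_self_eq_norm_sq] at hI
      nlinarith
    have := real_inner_le_norm p y
    nlinarith [norm_nonneg p, norm_nonneg y]
  · intro h y hy
    rw [hdxp, dist_eq_norm]
    have h1 : ‖y‖ - ‖x‖ ≤ ‖x - y‖ := by
      rw [norm_sub_rev]; exact norm_sub_norm_le _ _
    have h2 : ‖x‖ = (1 - c) * ‖p‖ := by
      rw [hx, norm_smul, Real.norm_eq_abs, abs_of_pos (by linarith)]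
    have := h y hy
    nlinarith [norm_nonneg p]
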